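/- arXiv:2106.09405 — 12 statements merged into one kernel-verified Lean document; each statement's English description precedes it below -/
import Mathlib

section
/- Let ε ∈ (0,1], p ∈ Δ(K), x a mixed action, and x' := c_ε(x,p) the image of x under the ε-silent mapping at p. Then for every i ∈ I, the marginal of x' under p equals the marginal of x under p: x̄'^p(i) = x̄^p(i). -/
open Finset

noncomputable section
open Classical

/-- `p` is an element of the probability simplex Δ(K). -/
def pSimplex {K : Type*} [Fintype K] (p : K → ℝ) : Prop :=
  (∀ k, 0 ≤ p k) ∧ ∑ k, p k = 1

/-- `x : K → Δ(I)` is a mixed action, written `x k i = x(i|k)`. -/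
def MixedAction {K I : Type*} [Fintype K] [Fintype I] (x : K → I → ℝ) : Prop :=
  (∀ k i, 0 ≤ x k i) ∧ ∀ k, ∑ i, x k i = 1

/-- Marginal `x̄^p(i) = ∑_k p(k)·x(i|k)`. -/
def bar {K I : Type*} [Fintype K] (p : K → ℝ) (x : K → I → ℝ) (i : I) : ℝ :=
  ∑ k, p k * x k i

/-- Posterior `p^x(k|i)`. -/
def post {K I : Type*} [Fintype K] (p : K → ℝ) (x : K → I → ℝ) (i : I) (k : K) : ℝ :=
  if bar p x i ≠ 0 then x k i * p k / bar p x i else p k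

/-- The set `NR[x,ε,p]` of (x,ε)-non-revealing actions at p. -/
def NRset {K I : Type*} [Fintype K] [Fintype I] (x : K → I → ℝ) (ε : ℝ) (p : K → ℝ) :
    Finset I :=
  Finset.univ.filter fun i =>
    bar p x i ≠ 0 ∧ ∀ k, (1 - ε) * bar p x i ≤ x k i ∧ x k i ≤ (1 + ε) * bar p x i

/-- The set `R[x,ε,p]` of (x,ε)-revealing actions at p. -/
def Rset {K I : Type*} [Fintype K] [Fintype I] (x : K → I → ℝ) (ε : ℝ) (p : K → ℝ) :
    Finset I :=
  (Finset.univ.filter fun i => bar p x i ≠ 0) \ NRset x ε p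

/-- `x(A|k) = ∑_{i∈A} x(i|k)`. -/
def xOn {K I : Type*} (x : K → I → ℝ) (A : Finset I) (k : K) : ℝ := ∑ i ∈ A, x k i

/-- `x̄^p(A) = ∑_{i∈A} x̄^p(i)`. -/
def barOn {K I : Type*} [Fintype K] (p : K → ℝ) (x : K → I → ℝ) (A : Finset I) : ℝ :=
  ∑ i ∈ A, bar p x i

/-- The ε-silent mapping `c_ε(x,p)`. -/
def silent {K I : Type*} [Fintype K] [Fintype I] (ε : ℝ) (x : K → I → ℝ) (p : K → ℝ) :
    K → I → ℝ :=
  fun k i =>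
    if i ∈ NRset x ε p then
      ((1 - ε) * xOn x (NRset x ε p) k / barOn p x (NRset x ε p) + ε) * bar p x i
    else (1 - ε) * x k i + ε * bar p x i

/-- the ε-silent mapping preserves marginals. -/
theorem silent_preserves_marginal {K I : Type*} [Fintype K] [Fintype I]
    [Nonempty K] [Nonempty I]
    (ε : ℝ) (hε0 : 0 < ε) (hε1 : ε ≤ 1)
    (p : K → ℝ) (hp : pSimplex p)
    (x : K → I → ℝ) (hx : MixedAction x) :
    ∀ i : I, bar p (silent ε x p) i = bar p x i := by
  intro i
  unfold bar silent
  by_cases hi : i ∈ NRset x ε p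
  · simp only [hi, if_pos]
    have hbar_nonneg : ∀ j, 0 ≤ bar p x j := fun j =>
      Finset.sum_nonneg fun k _ => mul_nonneg (hp.1 k) (hx.1 k j)
    have hbar_ne : bar p x i ≠ 0 := (Finset.mem_filter.mp hi).2.1
    have hbar_pos : 0 < bar p x i := lt_of_le_of_ne (hbar_nonneg i) (Ne.symm hbar_ne)
    have hBOn : 0 < barOn p x (NRset x ε p) := by
      have : bar p x i ≤ barOn p x (NRset x ε p) :=
        Finset.single_le_sum (fun j _ => hbar_nonneg j) hi
      linarith
    have hsum : ∑ k, p k * xOn x (NRset x ε p) k = barOn p x (NRset x ε p) := by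
      unfold xOn barOn bar
      rw [Finset.sum_comm]
      simp [Finset.mul_sum]
    have : ∑ k, p k * (((1 - ε) * xOn x (NRset x ε p) k / barOn p x (NRset x ε p) + ε)
        * bar p x i)
        = ((1 - ε) / barOn p x (NRset x ε p) * (∑ k, p k * xOn x (NRset x ε p) k)
          + ε * ∑ k, p k) * bar p x i := by
      calc ∑ k, p k * (((1 - ε) * xOn x (NRset x ε p) k / barOn p x (NRset x ε p) + ε)
            * bar p x i)
          = ∑ k, ((1 - ε) / barOn p x (NRset x ε p) * (p k * xOn x (NRset x ε p) k)
              + ε * p k) * bar p x i := by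
            apply Finset.sum_congr rfl; intros; ring
        _ = _ := by
            rw [← Finset.sum_mul, Finset.sum_add_distrib, ← Finset.mul_sum, ← Finset.mul_sum]
    rw [this, hsum, hp.2, div_mul_cancel₀ _ (ne_of_gt hBOn)]
    unfold bar; ring
  · simp only [hi, if_neg, not_false_iff]
    have : ∑ k, p k * ((1 - ε) * x k i + ε * bar p x i)
        = (1 - ε) * (∑ k, p k * x k i) + ε * bar p x i * ∑ k, p k := by
      rw [Finset.mul_sum, Finset.mul_sum, ← Finset.sum_add_distrib]
      congr 1; ext k; ring
    rw [this, hp.2]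
    unfold bar; ring
end
end

section
/- Let ε ∈ (0,1/4], ε₀ := (1−√(1−4ε))/2, p ∈ Δ(K), x a mixed action, and x' := c_{ε₀}(x,p). Then NR[x',ε,p] = NR[x,ε₀,p], i.e. an action is (x',ε)-non-revealing at p exactly when it is (x,ε₀)-non-revealing at p. -/
open Finset

noncomputable section
open Classical

section aux
variable {K I : Type*} [Fintype K] [Fintype I]

lemma mem_NRset {x : K → I → ℝ} {ε : ℝ} {p : K → ℝ} {i : I} :
    i ∈ NRset x ε p ↔ bar p x i ≠ 0 ∧
      ∀ k, (1 - ε) * bar p x i ≤ x k i ∧ x k i ≤ (1 + ε) * bar p x i := by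
  simp [NRset]

lemma bar_nonneg {p : K → ℝ} (hp : pSimplex p) {x : K → I → ℝ} (hx : MixedAction x) (i : I) :
    0 ≤ bar p x i :=
  Finset.sum_nonneg fun k _ => mul_nonneg (hp.1 k) (hx.1 k i)

lemma sum_p_xOn (p : K → ℝ) (x : K → I → ℝ) (A : Finset I) :
    ∑ k, p k * xOn x A k = barOn p x A := by
  unfold xOn barOn bar
  simp only [Finset.mul_sum]
  exact Finset.sum_comm

lemma barOn_pos {p : K → ℝ} (hp : pSimplex p) {x : K → I → ℝ} (hx : MixedAction x)
    {ε₀ : ℝ} {i : I} (hi : i ∈ NRset x ε₀ p) :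
    0 < barOn p x (NRset x ε₀ p) := by
  have h1 : 0 < bar p x i :=
    lt_of_le_of_ne (bar_nonneg hp hx i) (Ne.symm (mem_NRset.mp hi).1)
  have h2 : bar p x i ≤ barOn p x (NRset x ε₀ p) :=
    Finset.single_le_sum (fun j _ => bar_nonneg hp hx j) hi
  linarith

lemma bar_silent (ε₀ : ℝ) {p : K → ℝ} (hp : pSimplex p) {x : K → I → ℝ} (hx : MixedAction x)
    (i : I) : bar p (silent ε₀ x p) i = bar p x i := by
  by_cases hi : i ∈ NRset x ε₀ p
  · have hB : 0 < barOn p x (NRset x ε₀ p) := barOn_pos hp hx hi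
    have hBne : barOn p x (NRset x ε₀ p) ≠ 0 := ne_of_gt hB
    show ∑ k, p k * silent ε₀ x p k i = bar p x i
    calc ∑ k, p k * silent ε₀ x p k i
        = ∑ k, (p k * xOn x (NRset x ε₀ p) k *
            ((1 - ε₀) * bar p x i / barOn p x (NRset x ε₀ p)) +
            p k * (ε₀ * bar p x i)) := by
          refine Finset.sum_congr rfl fun k _ => ?_
          simp only [silent, if_pos hi]
          field_simp
      _ = (∑ k, p k * xOn x (NRset x ε₀ p) k) *
            ((1 - ε₀) * bar p x i / barOn p x (NRset x ε₀ p)) +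
            (∑ k, p k) * (ε₀ * bar p x i) := by
          rw [Finset.sum_add_distrib, ← Finset.sum_mul, ← Finset.sum_mul]
      _ = barOn p x (NRset x ε₀ p) *
            ((1 - ε₀) * bar p x i / barOn p x (NRset x ε₀ p)) + 1 * (ε₀ * bar p x i) := by
          rw [sum_p_xOn, hp.2]
      _ = bar p x i := by field_simp; ring
  · show ∑ k, p k * silent ε₀ x p k i = bar p x i
    calc ∑ k, p k * silent ε₀ x p k i
        = ∑ k, ((1 - ε₀) * (p k * x k i) + p k * (ε₀ * bar p x i)) := by
          refine Finset.sum_congr rfl fun k _ => ?_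
          simp only [silent, if_neg hi]
          ring
      _ = (1 - ε₀) * (∑ k, p k * x k i) + (∑ k, p k) * (ε₀ * bar p x i) := by
          rw [Finset.sum_add_distrib, ← Finset.mul_sum, ← Finset.sum_mul]
      _ = bar p x i := by rw [hp.2]; show _ * bar p x i + _ = _; ring

end aux

/-- with ε₀ = (1−√(1−4ε))/2 and x' = c_{ε₀}(x,p), NR[x',ε,p] = NR[x,ε₀,p]. -/
theorem NR_silent_eq {K I : Type*} [Fintype K] [Fintype I] [Nonempty K] [Nonempty I]
    (ε : ℝ) (hε0 : 0 < ε) (hε1 : ε ≤ 1/4)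
    (p : K → ℝ) (hp : pSimplex p)
    (x : K → I → ℝ) (hx : MixedAction x) :
    NRset (silent ((1 - Real.sqrt (1 - 4*ε))/2) x p) ε p
      = NRset x ((1 - Real.sqrt (1 - 4*ε))/2) p := by
  set ε₀ := (1 - Real.sqrt (1 - 4*ε))/2 with hε₀def
  have hs0 : (0:ℝ) ≤ 1 - 4*ε := by linarith
  have hsq : Real.sqrt (1 - 4*ε) ^ 2 = 1 - 4*ε := Real.sq_sqrt hs0
  have hsnn : 0 ≤ Real.sqrt (1 - 4*ε) := Real.sqrt_nonneg _
  have hslt : Real.sqrt (1 - 4*ε) < 1 := by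
    nlinarith [hsq, hsnn]
  have hε₀pos : 0 < ε₀ := by rw [hε₀def]; linarith
  have hε₀half : ε₀ ≤ 1/2 := by rw [hε₀def]; linarith
  have hkey : ε₀ - ε₀^2 = ε := by rw [hε₀def]; nlinarith [hsq]
  ext i
  rw [mem_NRset, mem_NRset, bar_silent ε₀ hp hx i]
  constructor
  · rintro ⟨hne, hbd⟩
    by_contra hi
    have hbar : 0 < bar p x i := lt_of_le_of_ne (bar_nonneg hp hx i) (Ne.symm hne)
    have hiA : i ∉ NRset x ε₀ p := by rw [mem_NRset]; exact hi
    push_neg at hi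
    obtain ⟨k, hk⟩ := hi hne
    have hx' : silent ε₀ x p k i = (1 - ε₀) * x k i + ε₀ * bar p x i := by
      simp only [silent, if_neg hiA]
    have hb := hbd k
    rw [hx'] at hb
    rcases lt_or_ge (x k i) ((1 - ε₀) * bar p x i) with hlt | hge
    · nlinarith [hb.1, hlt, hbar, hkey]
    · have hgt : (1 + ε₀) * bar p x i < x k i := hk hge
      nlinarith [hb.2, hgt, hbar, hkey]
  · intro hi'
    have hi : i ∈ NRset x ε₀ p := mem_NRset.mpr hi'
    have hmem := hi'
    have hbar : 0 < bar p x i := lt_of_le_of_ne (bar_nonneg hp hx i) (Ne.symm hmem.1)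
    have hB : 0 < barOn p x (NRset x ε₀ p) := barOn_pos hp hx hi
    refine ⟨hmem.1, fun k => ?_⟩
    have hlow : (1 - ε₀) * barOn p x (NRset x ε₀ p) ≤ xOn x (NRset x ε₀ p) k := by
      rw [barOn, xOn, Finset.mul_sum]
      exact Finset.sum_le_sum fun j hj => ((mem_NRset.mp hj).2 k).1
    have hhigh : xOn x (NRset x ε₀ p) k ≤ (1 + ε₀) * barOn p x (NRset x ε₀ p) := by
      rw [barOn, xOn, Finset.mul_sum]
      exact Finset.sum_le_sum fun j hj => ((mem_NRset.mp hj).2 k).2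
    have hx' : silent ε₀ x p k i =
        ((1 - ε₀) * xOn x (NRset x ε₀ p) k / barOn p x (NRset x ε₀ p) + ε₀) * bar p x i := by
      simp only [silent, if_pos hi]
    rw [hx']
    set q := xOn x (NRset x ε₀ p) k / barOn p x (NRset x ε₀ p) with hq
    have hq1 : 1 - ε₀ ≤ q := (le_div_iff₀ hB).mpr (by linarith)
    have hq2 : q ≤ 1 + ε₀ := (div_le_iff₀ hB).mpr (by linarith)
    have hrw : (1 - ε₀) * xOn x (NRset x ε₀ p) k / barOn p x (NRset x ε₀ p) = (1 - ε₀) * q := by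
      rw [hq]; ring
    rw [hrw]
    have h1 : 0 ≤ (1 - ε₀) * (q - (1 - ε₀)) * bar p x i :=
      mul_nonneg (mul_nonneg (by linarith) (by linarith)) hbar.le
    have h2 : 0 ≤ (1 - ε₀) * ((1 + ε₀) - q) * bar p x i :=
      mul_nonneg (mul_nonneg (by linarith) (by linarith)) hbar.le
    constructor
    · nlinarith [h1, hbar, hkey]
    · nlinarith [h2, hbar, hkey]
end
end

section
/- Let ε ∈ (0,1/4], ε₀ := (1−√(1−4ε))/2, p ∈ Δ(K), x a mixed action, and x' := c_{ε₀}(x,p). Then for every k ∈ K and i ∈ I one has p^{x'}(k|i) ≥ ε·p(k); in particular x' is ε-ambiguous at p, i.e. p^{x'}(k|i) ≥ ε·min_{k'∈K} p(k') for all k, i. -/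
open Finset

noncomputable section
open Classical

/-- x' = c_{ε₀}(x,p) satisfies p^{x'}(k|i) ≥ ε·p(k) for all k,i;
in particular x' is ε-ambiguous at p. -/
theorem silent_is_ambiguous {K I : Type*} [Fintype K] [Fintype I] [Nonempty K] [Nonempty I]
    (ε : ℝ) (hε0 : 0 < ε) (hε1 : ε ≤ 1/4)
    (p : K → ℝ) (hp : pSimplex p)
    (x : K → I → ℝ) (hx : MixedAction x) :
    (∀ (k : K) (i : I),
        ε * p k ≤ post p (silent ((1 - Real.sqrt (1 - 4*ε))/2) x p) i k) ∧
      ∀ (k : K) (i : I),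
        ε * Finset.univ.inf' Finset.univ_nonempty p ≤
          post p (silent ((1 - Real.sqrt (1 - 4*ε))/2) x p) i k := by
  obtain ⟨hp0, hp1⟩ := hp
  obtain ⟨hx0, hx1⟩ := hx
  set ε₀ := (1 - Real.sqrt (1 - 4*ε))/2 with hε₀def
  have hs0 : 0 ≤ Real.sqrt (1 - 4*ε) := Real.sqrt_nonneg _
  have hssq : Real.sqrt (1 - 4*ε) ≤ 1 - 2*ε := by
    have h1 : (0:ℝ) ≤ 1 - 2*ε := by linarith
    have h2 : (1 - 4*ε) ≤ (1 - 2*ε)^2 := by nlinarith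
    calc Real.sqrt (1 - 4*ε) ≤ Real.sqrt ((1 - 2*ε)^2) := Real.sqrt_le_sqrt h2
      _ = 1 - 2*ε := Real.sqrt_sq h1
  have hεε₀ : ε ≤ ε₀ := by rw [hε₀def]; linarith
  have hε₀0 : 0 < ε₀ := lt_of_lt_of_le hε0 hεε₀
  have hε₀1 : ε₀ ≤ 1/2 := by rw [hε₀def]; linarith
  set x' := silent ε₀ x p with hx'def
  have hbar0 : ∀ i, 0 ≤ bar p x i := fun i =>
    Finset.sum_nonneg fun k _ => mul_nonneg (hp0 k) (hx0 k i)
  have key : ∀ (k : K) (i : I), bar p x' i = bar p x i ∧ ε₀ * bar p x i ≤ x' k i := by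
    intro k i
    by_cases hi : i ∈ NRset x ε₀ p
    · have hbari : bar p x i ≠ 0 := (Finset.mem_filter.mp hi).2.1
      have hbarip : 0 < bar p x i := lt_of_le_of_ne (hbar0 i) (Ne.symm hbari)
      have hB : 0 < barOn p x (NRset x ε₀ p) :=
        lt_of_lt_of_le hbarip (Finset.single_le_sum (fun j _ => hbar0 j) hi)
      have hBsum : barOn p x (NRset x ε₀ p) = ∑ k', p k' * xOn x (NRset x ε₀ p) k' := by
        unfold barOn bar xOn
        rw [Finset.sum_comm]
        simp [Finset.mul_sum]
      have hcnn : ∀ k', 0 ≤ xOn x (NRset x ε₀ p) k' := fun k' =>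
        Finset.sum_nonneg fun j _ => hx0 k' j
      have hform : ∀ k', x' k' i
          = ((1 - ε₀) * xOn x (NRset x ε₀ p) k' / barOn p x (NRset x ε₀ p) + ε₀)
              * bar p x i := by
        intro k'
        rw [hx'def]
        unfold silent
        rw [if_pos hi]
      constructor
      · unfold bar
        have : ∀ k', p k' * x' k' i
            = (1 - ε₀) / barOn p x (NRset x ε₀ p)
                * (p k' * xOn x (NRset x ε₀ p) k') * bar p x i
              + ε₀ * bar p x i * p k' := by
          intro k'; rw [hform k']; ring
        rw [Finset.sum_congr rfl (fun k' _ => this k'), Finset.sum_add_distrib]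
        rw [← Finset.sum_mul, ← Finset.mul_sum, ← Finset.mul_sum, ← hBsum, hp1]
        show (1 - ε₀) / barOn p x (NRset x ε₀ p) * barOn p x (NRset x ε₀ p) * bar p x i
            + ε₀ * bar p x i * 1 = bar p x i
        field_simp
        ring
      · rw [hform k]
        have h1 : 0 ≤ (1 - ε₀) * xOn x (NRset x ε₀ p) k / barOn p x (NRset x ε₀ p) := by
          apply div_nonneg (mul_nonneg (by linarith) (hcnn k)) hB.le
        nlinarith [hbar0 i]
    · have hform : ∀ k', x' k' i = (1 - ε₀) * x k' i + ε₀ * bar p x i := by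
        intro k'
        rw [hx'def]
        unfold silent
        rw [if_neg hi]
      constructor
      · unfold bar
        have : ∀ k', p k' * x' k' i
            = (1 - ε₀) * (p k' * x k' i) + ε₀ * bar p x i * p k' := by
          intro k'; rw [hform k']; ring
        rw [Finset.sum_congr rfl (fun k' _ => this k'), Finset.sum_add_distrib]
        rw [← Finset.mul_sum, ← Finset.mul_sum, hp1]
        show (1 - ε₀) * (∑ k', p k' * x k' i) + ε₀ * bar p x i * 1 = bar p x i
        unfold bar
        ring
      · rw [hform k]
        nlinarith [hx0 k i, hbar0 i]
  have main : ∀ (k : K) (i : I), ε * p k ≤ post p x' i k := by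
    intro k i
    obtain ⟨hbar, hlow⟩ := key k i
    unfold post
    rw [hbar]
    by_cases hbi : bar p x i = 0
    · rw [if_neg (by simpa using hbi)]
      nlinarith [hp0 k]
    · rw [if_pos hbi]
      have hbp : 0 < bar p x i := lt_of_le_of_ne (hbar0 i) (Ne.symm hbi)
      rw [le_div_iff₀ hbp]
      nlinarith [hp0 k, mul_le_mul_of_nonneg_right hlow (hp0 k),
        mul_le_mul_of_nonneg_right (mul_le_mul_of_nonneg_right hεε₀ (hbar0 i)) (hp0 k)]
  refine ⟨main, fun k i => ?_⟩
  have hinf : Finset.univ.inf' Finset.univ_nonempty p ≤ p k :=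
    Finset.inf'_le p (Finset.mem_univ k)
  calc ε * Finset.univ.inf' Finset.univ_nonempty p ≤ ε * p k :=
        mul_le_mul_of_nonneg_left hinf hε0.le
    _ ≤ post p x' i k := main k i
end
end

section
/- Let ε ∈ (0,1], p ∈ Δ(K), x a mixed action, and x' := c_ε(x,p). Then for every i ∈ I: if i ∈ NR[x,ε,p], the posterior satisfies p^{x'}(·|i) = (1−ε)·∑_{i'∈NR[x,ε,p]} (x̄^p(i')/x̄^p(NR[x,ε,p]))·p^x(·|i') + ε·p; and otherwise p^{x'}(·|i) = (1−ε)·p^x(·|i) + ε·p. -/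
open Finset

noncomputable section
open Classical

/-- posterior decomposition under the ε-silent mapping. -/
theorem silent_posterior_formula {K I : Type*} [Fintype K] [Fintype I] [Nonempty K] [Nonempty I]
    (ε : ℝ) (hε0 : 0 < ε) (hε1 : ε ≤ 1)
    (p : K → ℝ) (hp : pSimplex p)
    (x : K → I → ℝ) (hx : MixedAction x) :
    (∀ i ∈ NRset x ε p, ∀ k : K,
        post p (silent ε x p) i k =
          (1 - ε) * (∑ i' ∈ NRset x ε p,
              bar p x i' / barOn p x (NRset x ε p) * post p x i' k) +
            ε * p k) ∧
      ∀ i ∉ NRset x ε p, ∀ k : K,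
        post p (silent ε x p) i k = (1 - ε) * post p x i k + ε * p k := by

  obtain ⟨hp0, hp1⟩ := hp
  obtain ⟨hx0, hx1⟩ := hx
  have hbar_nonneg : ∀ i, 0 ≤ bar p x i := fun i =>
    Finset.sum_nonneg fun k _ => mul_nonneg (hp0 k) (hx0 k i)
  have hswap : ∑ k, p k * xOn x (NRset x ε p) k = barOn p x (NRset x ε p) := by
    simp only [xOn, Finset.mul_sum, barOn, bar]
    rw [Finset.sum_comm]
  constructor
  · intro i hi k
    have hbi : bar p x i ≠ 0 := (Finset.mem_filter.mp hi).2.1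
    have hBpos : 0 < barOn p x (NRset x ε p) :=
      lt_of_lt_of_le (lt_of_le_of_ne (hbar_nonneg i) (Ne.symm hbi))
        (Finset.single_le_sum (fun j _ => hbar_nonneg j) hi)
    have hBne : barOn p x (NRset x ε p) ≠ 0 := ne_of_gt hBpos
    have hbar' : bar p (silent ε x p) i = bar p x i := by
      simp only [bar, silent, if_pos hi]
      have step : ∀ k', p k' * (((1 - ε) * xOn x (NRset x ε p) k' / barOn p x (NRset x ε p) + ε)
          * (∑ k, p k * x k i))
          = (1 - ε) / barOn p x (NRset x ε p) * (p k' * xOn x (NRset x ε p) k')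
              * (∑ k, p k * x k i) + ε * p k' * (∑ k, p k * x k i) := by
        intro k'; field_simp
      rw [Finset.sum_congr rfl fun k' _ => step k', Finset.sum_add_distrib,
        ← Finset.sum_mul, ← Finset.mul_sum]
      have h1 : ∑ k', p k' * xOn x (NRset x ε p) k' = barOn p x (NRset x ε p) := hswap
      have h2 : ∑ k', ε * p k' * (∑ k, p k * x k i) = ε * (∑ k, p k * x k i) := by
        rw [← Finset.sum_mul, ← Finset.mul_sum, hp1]; ring
      rw [h1, h2]
      show (1 - ε) / barOn p x (NRset x ε p) * barOn p x (NRset x ε p) * bar p x i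
        + ε * bar p x i = bar p x i
      field_simp
      ring
    have hrhs : ∑ i' ∈ NRset x ε p,
        bar p x i' / barOn p x (NRset x ε p) * post p x i' k
        = xOn x (NRset x ε p) k * p k / barOn p x (NRset x ε p) := by
      rw [xOn, Finset.sum_mul, Finset.sum_div]
      refine Finset.sum_congr rfl ?_
      intro i' hi'
      have hbi' : bar p x i' ≠ 0 := (Finset.mem_filter.mp hi').2.1
      rw [post, if_pos hbi']
      field_simp
    rw [post, if_pos (hbar' ▸ hbi), hbar', hrhs, silent, if_pos hi]
    field_simp
  · intro i hi k
    have hbar' : bar p (silent ε x p) i = bar p x i := by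
      simp only [bar, silent, if_neg hi]
      have step : ∀ k', p k' * ((1 - ε) * x k' i + ε * (∑ k, p k * x k i))
          = (1 - ε) * (p k' * x k' i) + ε * p k' * (∑ k, p k * x k i) := by
        intro k'; ring
      rw [Finset.sum_congr rfl fun k' _ => step k', Finset.sum_add_distrib,
        ← Finset.mul_sum]
      have h2 : ∑ k', ε * p k' * (∑ k, p k * x k i) = ε * (∑ k, p k * x k i) := by
        rw [← Finset.sum_mul, ← Finset.mul_sum, hp1]; ring
      rw [h2]; ring
    by_cases hbi : bar p x i = 0
    · rw [post, if_neg (by simp [hbar', hbi]), post, if_neg (by simp [hbi])]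
      ring
    · rw [post, if_pos (hbar' ▸ hbi), hbar', post, if_pos hbi, silent, if_neg hi]
      field_simp
end
end

section
/- Let ε > 0, G ≥ 0, p ∈ Δ(K), q ∈ Δ(L), y : L → Δ(J), and g : K × L × I × J → ℝ with |g(k,ℓ,i,j)| ≤ G for all k,ℓ,i,j. Let x and x' be mixed actions such that x̄'^p(i) = x̄^p(i) for all i ∈ I and ‖p^{x'}(·|i) − p^x(·|i)‖₁ ≤ ε for all i ∈ I. Then |∑_{k,ℓ,i,j} p(k)·q(ℓ)·x'(i|k)·y(j|ℓ)·g(k,ℓ,i,j) − ∑_{k,ℓ,i,j} p(k)·q(ℓ)·x(i|k)·y(j|ℓ)·g(k,ℓ,i,j)| ≤ ε·G. -/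
open Finset

noncomputable section
open Classical

/-- payoff closeness under marginal preservation and ℓ¹-closeness of posteriors. -/
theorem payoff_close {K L I J : Type*} [Fintype K] [Fintype L] [Fintype I] [Fintype J]
    [Nonempty K] [Nonempty L] [Nonempty I] [Nonempty J]
    (ε G : ℝ) (hε : 0 < ε) (hG : 0 ≤ G)
    (p : K → ℝ) (hp : pSimplex p) (q : L → ℝ) (hq : pSimplex q)
    (y : L → J → ℝ) (hy : MixedAction y)
    (g : K → L → I → J → ℝ) (hg : ∀ k l i j, |g k l i j| ≤ G)
    (x x' : K → I → ℝ) (hx : MixedAction x) (hx' : MixedAction x')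
    (hbar : ∀ i, bar p x' i = bar p x i)
    (hpost : ∀ i, ∑ k, |post p x' i k - post p x i k| ≤ ε) :
    |(∑ k, ∑ l, ∑ i, ∑ j, p k * q l * x' k i * y l j * g k l i j) -
        ∑ k, ∑ l, ∑ i, ∑ j, p k * q l * x k i * y l j * g k l i j| ≤ ε * G := by
  obtain ⟨hp0, hp1⟩ := hp
  obtain ⟨hq0, hq1⟩ := hq
  obtain ⟨hy0, hy1⟩ := hy
  obtain ⟨hx0, hx1⟩ := hx
  obtain ⟨hx'0, hx'1⟩ := hx'
  set h : K → I → ℝ := fun k i => ∑ l, ∑ j, q l * y l j * g k l i j with hh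
  have hbound : ∀ k i, |h k i| ≤ G := by
    intro k i
    calc |∑ l, ∑ j, q l * y l j * g k l i j|
        ≤ ∑ l, ∑ j, |q l * y l j * g k l i j| := by
          refine (Finset.abs_sum_le_sum_abs _ _).trans ?_
          exact Finset.sum_le_sum fun l _ => Finset.abs_sum_le_sum_abs _ _
      _ ≤ ∑ l, ∑ j, q l * y l j * G := by
          refine Finset.sum_le_sum fun l _ => Finset.sum_le_sum fun j _ => ?_
          rw [abs_mul, abs_mul, abs_of_nonneg (hq0 l), abs_of_nonneg (hy0 l j)]
          exact mul_le_mul_of_nonneg_left (hg k l i j) (mul_nonneg (hq0 l) (hy0 l j))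
      _ = G := by
          have hl : ∀ l, ∑ j, q l * y l j * G = q l * G := fun l => by
            rw [← Finset.sum_mul, ← Finset.mul_sum, hy1 l, mul_one]
          simp_rw [hl, ← Finset.sum_mul, hq1, one_mul]
  have key : ∀ (z : K → I → ℝ), (∀ k i, 0 ≤ z k i) → ∀ i k,
      p k * z k i = bar p z i * post p z i k := by
    intro z hz i k
    unfold post
    by_cases hb : bar p z i = 0
    · simp only [hb, ne_eq, not_true_eq_false, if_neg, not_false_eq_true, ite_false,
        zero_mul]
      have := (Finset.sum_eq_zero_iff_of_nonneg
        (fun k' _ => mul_nonneg (hp0 k') (hz k' i))).mp hb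
      exact this k (Finset.mem_univ k)
    · rw [if_pos hb]
      field_simp
  have step : ∀ z : K → I → ℝ, (∑ i, ∑ k, (p k * z k i) * h k i)
      = ∑ k, ∑ l, ∑ i, ∑ j, p k * q l * z k i * y l j * g k l i j := by
    intro z
    simp_rw [hh, Finset.mul_sum]
    rw [Finset.sum_comm]
    refine Finset.sum_congr rfl fun k _ => ?_
    rw [Finset.sum_comm]
    exact Finset.sum_congr rfl fun l _ => Finset.sum_congr rfl fun i _ =>
      Finset.sum_congr rfl fun j _ => by ring
  have hbar0 : ∀ i, 0 ≤ bar p x i := fun i =>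
    Finset.sum_nonneg fun k _ => mul_nonneg (hp0 k) (hx0 k i)
  have hbarsum : ∑ i, bar p x i = 1 := by
    unfold bar
    rw [Finset.sum_comm]
    simp_rw [← Finset.mul_sum, hx1, mul_one, hp1]
  rw [← step x', ← step x, ← Finset.sum_sub_distrib]
  calc |∑ i, ((∑ k, (p k * x' k i) * h k i) - ∑ k, (p k * x k i) * h k i)|
      ≤ ∑ i, |(∑ k, (p k * x' k i) * h k i) - ∑ k, (p k * x k i) * h k i| :=
        Finset.abs_sum_le_sum_abs _ _
    _ ≤ ∑ i, bar p x i * (ε * G) := by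
        refine Finset.sum_le_sum fun i _ => ?_
        have heq : (∑ k, (p k * x' k i) * h k i) - ∑ k, (p k * x k i) * h k i
            = bar p x i * ∑ k, (post p x' i k - post p x i k) * h k i := by
          simp_rw [key x' hx'0 i, key x hx0 i, hbar, Finset.mul_sum, sub_mul]
          rw [← Finset.sum_sub_distrib]
          exact Finset.sum_congr rfl fun k _ => by ring
        rw [heq, abs_mul, abs_of_nonneg (hbar0 i)]
        refine mul_le_mul_of_nonneg_left ?_ (hbar0 i)
        calc |∑ k, (post p x' i k - post p x i k) * h k i|
            ≤ ∑ k, |post p x' i k - post p x i k| * |h k i| := by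
              refine (Finset.abs_sum_le_sum_abs _ _).trans ?_
              exact Finset.sum_le_sum fun k _ => le_of_eq (abs_mul _ _)
          _ ≤ ∑ k, |post p x' i k - post p x i k| * G :=
              Finset.sum_le_sum fun k _ =>
                mul_le_mul_of_nonneg_left (hbound k i) (abs_nonneg _)
          _ = (∑ k, |post p x' i k - post p x i k|) * G := by
              rw [Finset.sum_mul]
          _ ≤ ε * G := mul_le_mul_of_nonneg_right (hpost i) hG
    _ = ε * G := by rw [← Finset.sum_mul, hbarsum, one_mul]
end
end

section
/- Let ε > 0, p ∈ Δ(K) with p(k) > 0 for all k ∈ K, and let x be a mixed action that is ε-concise at p. Then for every i ∈ NR[x,ε,p], ‖p^x(·|i) − p‖₁ ≤ 2·‖1/p‖_∞·(x̄^p(R[x,ε,p]) / x̄^p(NR[x,ε,p])), where ‖1/p‖_∞ := max_{k∈K} 1/p(k). -/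
open Finset

noncomputable section
open Classical

/-- for an ε-concise action, non-revealing posteriors stay close to p. -/
theorem concise_nonrevealing_posterior_close {K I : Type*} [Fintype K] [Fintype I]
    [Nonempty K] [Nonempty I]
    (ε : ℝ) (hε : 0 < ε)
    (p : K → ℝ) (hp : pSimplex p) (hpos : ∀ k, 0 < p k)
    (x : K → I → ℝ) (hx : MixedAction x)
    (hconc : ∀ i ∈ NRset x ε p, ∀ k : K,
      x k i = xOn x (NRset x ε p) k / barOn p x (NRset x ε p) * bar p x i) :
    ∀ i ∈ NRset x ε p,
      ∑ k, |post p x i k - p k| ≤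
        2 * (Finset.univ.sup' Finset.univ_nonempty fun k => 1 / p k) *
          (barOn p x (Rset x ε p) / barOn p x (NRset x ε p)) := by
  intro i hi
  set N := NRset x ε p with hN
  set Rs := Rset x ε p with hRdef
  -- basic nonnegativity
  have hbarnn : ∀ j, 0 ≤ bar p x j := fun j =>
    Finset.sum_nonneg fun k _ => mul_nonneg (hp.1 k) (hx.1 k j)
  have hine : bar p x i ≠ 0 := (Finset.mem_filter.mp hi).2.1
  have hbari : 0 < bar p x i := lt_of_le_of_ne (hbarnn i) (Ne.symm hine)
  have hBN : 0 < barOn p x N := by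
    have h1 : bar p x i ≤ barOn p x N :=
      Finset.single_le_sum (f := fun j => bar p x j) (fun j _ => hbarnn j) hi
    exact lt_of_lt_of_le hbari h1
  -- bar j = 0 implies x k j = 0
  have hzero : ∀ j, bar p x j = 0 → ∀ k, x k j = 0 := by
    intro j hj k
    have h := (Finset.sum_eq_zero_iff_of_nonneg
      (fun k _ => mul_nonneg (hp.1 k) (hx.1 k j))).mp hj k (Finset.mem_univ k)
    rcases mul_eq_zero.mp h with h | h
    · exact absurd h (hpos k).ne'
    · exact h
  set S : Finset I := Finset.univ.filter fun j => bar p x j ≠ 0 with hSdef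
  have hNS : N ⊆ S := by
    intro j hj
    rcases Finset.mem_filter.mp hj with ⟨_, h1, _⟩
    exact Finset.mem_filter.mpr ⟨Finset.mem_univ j, h1⟩
  have hRS : Rs = S \ N := rfl
  -- sums over S equal sums over univ
  have hSx : ∀ k, ∑ j ∈ S, x k j = 1 := by
    intro k
    rw [← hx.2 k]
    apply Finset.sum_subset (Finset.filter_subset _ _)
    intro j _ hjS
    have : bar p x j = 0 := by
      by_contra h
      exact hjS (Finset.mem_filter.mpr ⟨Finset.mem_univ j, h⟩)
    exact hzero j this k
  have hbaruniv : ∑ j, bar p x j = 1 := by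
    unfold bar
    rw [show (∑ j, ∑ k, p k * x k j) = ∑ k, ∑ j, p k * x k j from Finset.sum_comm]
    have hk : ∀ k : K, ∑ j, p k * x k j = p k := fun k => by
      rw [← Finset.mul_sum, hx.2 k, mul_one]
    rw [Finset.sum_congr rfl fun k _ => hk k, hp.2]
  have hSbar : ∑ j ∈ S, bar p x j = 1 := by
    rw [← hbaruniv]
    apply Finset.sum_subset (Finset.filter_subset _ _)
    intro j _ hjS
    by_contra h
    exact hjS (Finset.mem_filter.mpr ⟨Finset.mem_univ j, h⟩)
  -- splitting sums
  have hxsplit : ∀ k, xOn x N k + xOn x Rs k = 1 := by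
    intro k
    rw [hRS]
    unfold xOn
    rw [add_comm, Finset.sum_sdiff hNS]
    exact hSx k
  have hbarsplit : barOn p x N + barOn p x Rs = 1 := by
    rw [hRS]
    unfold barOn
    rw [add_comm, Finset.sum_sdiff hNS]
    exact hSbar
  -- sum_k p k * xOn Rs k = barOn Rs
  have hpxR : ∑ k, p k * xOn x Rs k = barOn p x Rs := by
    unfold xOn barOn bar
    simp only [Finset.mul_sum]
    exact Finset.sum_comm
  -- posterior formula
  have hpost : ∀ k, post p x i k - p k = p k * (barOn p x Rs - xOn x Rs k) / barOn p x N := by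
    intro k
    have hc := hconc i hi k
    unfold post
    rw [if_pos hine, hc]
    have h1 : xOn x N k = 1 - xOn x Rs k := by linarith [hxsplit k]
    have h2 : barOn p x N = 1 - barOn p x Rs := by linarith
    field_simp
    linear_combination (p k) * h1 -
      (p k) * h2
  -- main estimate
  have hbound : ∑ k, |post p x i k - p k| ≤ 2 * (barOn p x Rs / barOn p x N) := by
    have h1 : ∀ k, |post p x i k - p k| ≤
        (p k * barOn p x Rs + p k * xOn x Rs k) / barOn p x N := by
      intro k
      rw [hpost k]
      rw [abs_div, abs_of_pos hBN]
      apply div_le_div_of_nonneg_right _ hBN.le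
      rw [abs_mul, abs_of_pos (hpos k), ← mul_add]
      apply mul_le_mul_of_nonneg_left _ (hp.1 k)
      have hxRnn : 0 ≤ xOn x Rs k := Finset.sum_nonneg fun j _ => hx.1 k j
      have hbRnn : 0 ≤ barOn p x Rs := Finset.sum_nonneg fun j _ => hbarnn j
      rw [abs_le]
      constructor <;> linarith
    calc ∑ k, |post p x i k - p k|
        ≤ ∑ k, (p k * barOn p x Rs + p k * xOn x Rs k) / barOn p x N :=
          Finset.sum_le_sum fun k _ => h1 k
      _ = (∑ k, (p k * barOn p x Rs + p k * xOn x Rs k)) / barOn p x N := by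
          rw [Finset.sum_div]
      _ = (barOn p x Rs + barOn p x Rs) / barOn p x N := by
          rw [Finset.sum_add_distrib, hpxR, ← Finset.sum_mul, hp.2, one_mul]
      _ = 2 * (barOn p x Rs / barOn p x N) := by ring
  -- the sup is at least 1
  have hM : 1 ≤ Finset.univ.sup' Finset.univ_nonempty fun k => 1 / p k := by
    obtain ⟨k₀⟩ := ‹Nonempty K›
    have hpk : p k₀ ≤ 1 := by
      rw [← hp.2]
      exact Finset.single_le_sum (fun k _ => hp.1 k) (Finset.mem_univ k₀)
    have h1 : (1 : ℝ) ≤ 1 / p k₀ := by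
      rw [le_div_iff₀ (hpos k₀)]; linarith
    exact le_trans h1 (Finset.le_sup' (fun k => 1 / p k) (Finset.mem_univ k₀))
  have hratio : 0 ≤ barOn p x Rs / barOn p x N :=
    div_nonneg (Finset.sum_nonneg fun j _ => hbarnn j) hBN.le
  calc ∑ k, |post p x i k - p k| ≤ 2 * (barOn p x Rs / barOn p x N) := hbound
    _ ≤ 2 * (Finset.univ.sup' Finset.univ_nonempty fun k => 1 / p k) *
          (barOn p x Rs / barOn p x N) := by nlinarith
end
end

section
/- Let ε > 0 and p ∈ Δ(K) with p(k) > 0 for all k ∈ K, and let x be a mixed action. Then for every i ∈ R[x,ε,p], ‖p^x(·|i) − p‖₁ ≥ ε·min_{k∈K} p(k). -/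
open Finset

noncomputable section
open Classical

/-- revealing actions move the posterior by at least ε·min_k p(k) in ℓ¹. -/
theorem revealing_posterior_far {K I : Type*} [Fintype K] [Fintype I]
    [Nonempty K] [Nonempty I]
    (ε : ℝ) (hε : 0 < ε)
    (p : K → ℝ) (hp : pSimplex p) (hpos : ∀ k, 0 < p k)
    (x : K → I → ℝ) (hx : MixedAction x) :
    ∀ i ∈ Rset x ε p,
      ε * Finset.univ.inf' Finset.univ_nonempty p ≤ ∑ k, |post p x i k - p k| := by
  intro i hi
  simp only [Rset, NRset, Finset.mem_sdiff, Finset.mem_filter, Finset.mem_univ, true_and,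
    not_and, not_forall] at hi
  obtain ⟨hbar, hR⟩ := hi
  obtain ⟨k₀, hk₀⟩ := hR hbar
  have hbarpos : 0 < bar p x i := by
    rcases lt_or_eq_of_le (Finset.sum_nonneg fun k _ =>
      mul_nonneg (hpos k).le (hx.1 k i)) with h | h
    · exact h
    · exact absurd h.symm hbar
  have hdev : ε * bar p x i ≤ |x k₀ i - bar p x i| := by
    rcases lt_or_ge (x k₀ i) ((1 - ε) * bar p x i) with h | h
    · have : x k₀ i - bar p x i < -(ε * bar p x i) := by nlinarith
      calc ε * bar p x i ≤ -(x k₀ i - bar p x i) := by linarith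
        _ ≤ |x k₀ i - bar p x i| := neg_le_abs _
    · have h2 := hk₀ h
      push_neg at h2
      have : ε * bar p x i < x k₀ i - bar p x i := by nlinarith
      exact le_trans this.le (le_abs_self _)
  have hterm : ε * p k₀ ≤ |post p x i k₀ - p k₀| := by
    have : post p x i k₀ - p k₀ = p k₀ * (x k₀ i - bar p x i) / bar p x i := by
      simp only [post, if_pos hbar]
      field_simp
    rw [this, abs_div, abs_mul, abs_of_pos (hpos k₀), abs_of_pos hbarpos]
    rw [le_div_iff₀ hbarpos]
    calc ε * p k₀ * bar p x i = p k₀ * (ε * bar p x i) := by ring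
      _ ≤ p k₀ * |x k₀ i - bar p x i| := by
          exact mul_le_mul_of_nonneg_left hdev (hpos k₀).le
  have hmin : Finset.univ.inf' Finset.univ_nonempty p ≤ p k₀ :=
    Finset.inf'_le _ (Finset.mem_univ k₀)
  calc ε * Finset.univ.inf' Finset.univ_nonempty p ≤ ε * p k₀ :=
        mul_le_mul_of_nonneg_left hmin hε.le
    _ ≤ |post p x i k₀ - p k₀| := hterm
    _ ≤ ∑ k, |post p x i k - p k| :=
        Finset.single_le_sum (f := fun k => |post p x i k - p k|) (fun k _ => abs_nonneg _) (Finset.mem_univ k₀)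
end
end

section
/- Let ε ∈ (0,1] and p ∈ Δ(K) with p(k) > ε for all k ∈ K, and let x be a mixed action that is ε-concise at p. Then ∑_{i∈I} x̄^p(i)·‖p^x(·|i) − p‖₁ ≤ 3·ε^{−5}·∑_{i∈I} x̄^p(i)·‖p^x(·|i) − p‖₁². -/
open Finset

noncomputable section
open Classical

/-- per-stage L¹-vs-L² inequality for ε-concise actions away from the frontier. -/
theorem concise_l1_le_l2 {K I : Type*} [Fintype K] [Fintype I]
    [Nonempty K] [Nonempty I]
    (ε : ℝ) (hε0 : 0 < ε) (hε1 : ε ≤ 1)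
    (p : K → ℝ) (hp : pSimplex p) (hpε : ∀ k, ε < p k)
    (x : K → I → ℝ) (hx : MixedAction x)
    (hconc : ∀ i ∈ NRset x ε p, ∀ k : K,
      x k i = xOn x (NRset x ε p) k / barOn p x (NRset x ε p) * bar p x i) :
    ∑ i, bar p x i * (∑ k, |post p x i k - p k|) ≤
      3 / ε ^ 5 * ∑ i, bar p x i * (∑ k, |post p x i k - p k|) ^ 2 := by
  classical
  obtain ⟨hx0, hx1⟩ := hx
  obtain ⟨hp0, hp1⟩ := hp
  set N := NRset x ε p with hNdef
  set f : I → ℝ := fun i => ∑ k, |post p x i k - p k| with hfdef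
  have hεp : ∀ k, 0 < p k := fun k => lt_trans hε0 (hpε k)
  have hb0 : ∀ i, 0 ≤ bar p x i := fun i =>
    Finset.sum_nonneg fun k _ => mul_nonneg (hp0 k) (hx0 k i)
  have hbzero : ∀ i, bar p x i = 0 → ∀ k, x k i = 0 := by
    intro i hi k
    have h := (Finset.sum_eq_zero_iff_of_nonneg
      fun k _ => mul_nonneg (hp0 k) (hx0 k i)).1 hi k (Finset.mem_univ k)
    exact (mul_eq_zero.1 h).resolve_left (hεp k).ne'
  have hfnn : ∀ i, 0 ≤ f i := fun i => Finset.sum_nonneg fun k _ => abs_nonneg _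
  -- weight formula
  have hwf : ∀ i, bar p x i * f i = ∑ k, p k * |x k i - bar p x i| := by
    intro i
    by_cases hi : bar p x i = 0
    · rw [hi, zero_mul]
      symm
      refine Finset.sum_eq_zero fun k _ => ?_
      simp [hbzero i hi k, hi]
    · have hbpos : 0 < bar p x i := (hb0 i).lt_of_ne (Ne.symm hi)
      rw [hfdef]
      simp only
      rw [Finset.mul_sum]
      refine Finset.sum_congr rfl fun k _ => ?_
      rw [post, if_pos hi,
        show x k i * p k / bar p x i - p k = p k * (x k i - bar p x i) / bar p x i by
          field_simp,
        abs_div, abs_mul, abs_of_nonneg (hp0 k), abs_of_pos hbpos]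
      field_simp
  -- revealing actions have f ≥ ε²
  have hR : ∀ i, i ∉ N → bar p x i ≠ 0 → ε ^ 2 ≤ f i := by
    intro i hiN hib
    have hbpos : 0 < bar p x i := (hb0 i).lt_of_ne (Ne.symm hib)
    rw [hNdef, NRset, Finset.mem_filter] at hiN
    push_neg at hiN
    obtain ⟨k, hk⟩ := hiN (Finset.mem_univ i) hib
    have hxb : ε * bar p x i ≤ |x k i - bar p x i| := by
      rcases le_or_gt ((1 - ε) * bar p x i) (x k i) with h1 | h1
      · have h2 := hk h1
        calc ε * bar p x i ≤ x k i - bar p x i := by nlinarith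
          _ ≤ |x k i - bar p x i| := le_abs_self _
      · calc ε * bar p x i ≤ -(x k i - bar p x i) := by nlinarith
          _ ≤ |x k i - bar p x i| := neg_le_abs _
    have hterm : ε ^ 2 ≤ |post p x i k - p k| := by
      rw [post, if_pos hib,
        show x k i * p k / bar p x i - p k = p k * (x k i - bar p x i) / bar p x i by
          field_simp,
        abs_div, abs_mul, abs_of_nonneg (hp0 k), abs_of_pos hbpos, le_div_iff₀ hbpos]
      nlinarith [hpε k, abs_nonneg (x k i - bar p x i)]
    calc ε ^ 2 ≤ |post p x i k - p k| := hterm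
      _ ≤ f i := Finset.single_le_sum (fun k _ => abs_nonneg (post p x i k - p k))
          (Finset.mem_univ k)
  -- per-term bound off N
  have hcomp : ∀ i, i ∉ N → ε ^ 2 * (bar p x i * f i) ≤ bar p x i * f i ^ 2 := by
    intro i hi
    by_cases hib : bar p x i = 0
    · rw [hib]; simp
    · have h := hR i hi hib
      nlinarith [hb0 i, hfnn i, mul_nonneg (hb0 i) (hfnn i)]
  have hsum1 : ∑ i, bar p x i = 1 := by
    simp only [bar]
    rw [Finset.sum_comm]
    simp only [← Finset.mul_sum]
    simp [hx1, hp1]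
  -- the key comparison A ≤ B
  have hA : ∑ i ∈ N, bar p x i * f i ≤ ∑ i ∈ univ \ N, bar p x i * f i := by
    rcases Finset.eq_empty_or_nonempty N with hNe | hNe
    · rw [hNe]
      simp only [Finset.sum_empty]
      exact Finset.sum_nonneg fun i _ => mul_nonneg (hb0 i) (hfnn i)
    · have hBo : 0 < barOn p x N := by
        refine Finset.sum_pos (fun i hi => (hb0 i).lt_of_ne (Ne.symm ?_)) hNe
        exact (Finset.mem_filter.1 hi).2.1
      set c : K → ℝ := fun k => xOn x N k / barOn p x N with hcdef
      have hfN : ∀ i ∈ N, f i = ∑ k, |c k * p k - p k| := by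
        intro i hi
        have hib : bar p x i ≠ 0 := (Finset.mem_filter.1 hi).2.1
        refine Finset.sum_congr rfl fun k _ => ?_
        rw [post, if_pos hib, hconc i hi k]
        congr 1
        rw [hcdef]
        field_simp
      have hxsum : ∀ k, xOn x (univ \ N) k + xOn x N k = 1 := by
        intro k
        rw [xOn, xOn, Finset.sum_sdiff (Finset.subset_univ N), hx1 k]
      have hbsum : barOn p x (univ \ N) + barOn p x N = 1 := by
        rw [barOn, barOn, Finset.sum_sdiff (Finset.subset_univ N), hsum1]
      calc ∑ i ∈ N, bar p x i * f i
          = ∑ i ∈ N, bar p x i * ∑ k, |c k * p k - p k| :=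
            Finset.sum_congr rfl fun i hi => by rw [hfN i hi]
        _ = barOn p x N * ∑ k, |c k * p k - p k| := by rw [barOn, Finset.sum_mul]
        _ = ∑ k, p k * |xOn x (univ \ N) k - barOn p x (univ \ N)| := by
            rw [Finset.mul_sum]
            refine Finset.sum_congr rfl fun k _ => ?_
            have h1 : c k * p k - p k = (xOn x N k - barOn p x N) * p k / barOn p x N := by
              rw [hcdef]; field_simp
            have h2 : xOn x N k - barOn p x N =
                -(xOn x (univ \ N) k - barOn p x (univ \ N)) := by
              have := hxsum k; have := hbsum; linarith
            rw [h1, h2, abs_div, abs_mul, abs_neg, abs_of_nonneg (hp0 k), abs_of_pos hBo]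
            field_simp
        _ ≤ ∑ k, ∑ i ∈ univ \ N, p k * |x k i - bar p x i| := by
            refine Finset.sum_le_sum fun k _ => ?_
            rw [← Finset.mul_sum]
            refine mul_le_mul_of_nonneg_left ?_ (hp0 k)
            have : xOn x (univ \ N) k - barOn p x (univ \ N) =
                ∑ i ∈ univ \ N, (x k i - bar p x i) := by
              rw [xOn, barOn, Finset.sum_sub_distrib]
            rw [this]
            exact Finset.abs_sum_le_sum_abs _ _
        _ = ∑ i ∈ univ \ N, ∑ k, p k * |x k i - bar p x i| := Finset.sum_comm
        _ = ∑ i ∈ univ \ N, bar p x i * f i :=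
            Finset.sum_congr rfl fun i _ => (hwf i).symm
  -- assemble
  show ∑ i, bar p x i * f i ≤ 3 / ε ^ 5 * ∑ i, bar p x i * f i ^ 2
  have hsplit : ∑ i, bar p x i * f i =
      ∑ i ∈ univ \ N, bar p x i * f i + ∑ i ∈ N, bar p x i * f i :=
    (Finset.sum_sdiff (Finset.subset_univ N)).symm
  set B := ∑ i ∈ univ \ N, bar p x i * f i with hBdef
  set S := ∑ i, bar p x i * f i ^ 2 with hSdef
  have hSnn : 0 ≤ S := Finset.sum_nonneg fun i _ =>
    mul_nonneg (hb0 i) (sq_nonneg _)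
  have hBnn : 0 ≤ B := Finset.sum_nonneg fun i _ => mul_nonneg (hb0 i) (hfnn i)
  have hBS : ε ^ 2 * B ≤ S := by
    calc ε ^ 2 * B = ∑ i ∈ univ \ N, ε ^ 2 * (bar p x i * f i) := by
          rw [hBdef, Finset.mul_sum]
      _ ≤ ∑ i ∈ univ \ N, bar p x i * f i ^ 2 :=
          Finset.sum_le_sum fun i hi => hcomp i (Finset.mem_sdiff.1 hi).2
      _ ≤ S := Finset.sum_le_sum_of_subset_of_nonneg (Finset.sdiff_subset)
          fun i _ _ => mul_nonneg (hb0 i) (sq_nonneg _)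
  have hLHS : ∑ i, bar p x i * f i ≤ 2 * B := by rw [hsplit]; linarith
  have h2 : 2 * B ≤ 3 / ε ^ 5 * S := by
    rw [div_mul_eq_mul_div, le_div_iff₀ (pow_pos hε0 5)]
    have hε5 : ε ^ 5 = ε ^ 3 * ε ^ 2 := by ring
    have h3 : ε ^ 3 ≤ 1 := pow_le_one₀ hε0.le hε1
    nlinarith [mul_le_mul_of_nonneg_left hBS (pow_pos hε0 3).le,
      mul_nonneg (pow_pos hε0 3).le hSnn]
  linarith
end
end

section
/- Let (Ω, F, P) be a probability space with a filtration (F_m)_{m≥1}, let (p_m)_{m≥1} be a martingale with respect to (F_m) taking values in the simplex Δ(K) ⊆ ℝ^K, let T be a stopping time with respect to (F_m) with values in ℕ ∪ {∞}, and let c > 0. Suppose that for every m ≥ 1, almost surely 1_{m≤T}·E(‖p_{m+1} − p_m‖₁ | F_m) ≤ c·1_{m≤T}·E(‖p_{m+1} − p_m‖₁² | F_m). Then E(∑_{m=1}^∞ 1_{m≤T}·‖p_{m+1} − p_m‖₁) ≤ c·|K|. -/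
open Finset MeasureTheory
open scoped ENNReal

noncomputable section
open Classical

/-- a Δ(K)-valued martingale whose conditional ℓ¹ increments are dominated
(before a stopping time T) by c times the conditional squared-ℓ¹ increments has expected
ℓ¹ variation up to T at most c·|K|. -/
theorem martingale_l1_variation_bound {K : Type*} [Fintype K] [Nonempty K]
    {Ω : Type*} {m0 : MeasurableSpace Ω} {μ : Measure Ω} [IsProbabilityMeasure μ]
    (ℱ : Filtration ℕ m0)
    (p : ℕ → Ω → K → ℝ)
    (hmart : Martingale p ℱ μ)
    (hsimplex : ∀ (m : ℕ) (ω : Ω), (∀ k, 0 ≤ p m ω k) ∧ ∑ k, p m ω k = 1)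
    (T : Ω → ℕ∞)
    (hT : ∀ m : ℕ, MeasurableSet[ℱ m] {ω | (m : ℕ∞) ≤ T ω})
    (c : ℝ) (hc : 0 < c)
    (hstep : ∀ m : ℕ, 1 ≤ m → ∀ᵐ ω ∂μ,
      Set.indicator {ω' | (m : ℕ∞) ≤ T ω'}
          (μ[fun ω' => ∑ k, |p (m+1) ω' k - p m ω' k| | ℱ m]) ω ≤
        c * Set.indicator {ω' | (m : ℕ∞) ≤ T ω'}
          (μ[fun ω' => (∑ k, |p (m+1) ω' k - p m ω' k|) ^ 2 | ℱ m]) ω) :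
    ∑' m : ℕ,
        ∫ ω, Set.indicator {ω' | ((m + 1 : ℕ) : ℕ∞) ≤ T ω'}
          (fun ω' => ∑ k, |p (m+2) ω' k - p (m+1) ω' k|) ω ∂μ ≤
      c * Fintype.card K := by
  classical
  -- boundedness of components
  have hb01 : ∀ n ω k, 0 ≤ p n ω k ∧ p n ω k ≤ 1 := by
    intro n ω k
    refine ⟨(hsimplex n ω).1 k, ?_⟩
    have h := Finset.single_le_sum (f := fun i => p n ω i)
      (fun i _ => (hsimplex n ω).1 i) (Finset.mem_univ k)
    rw [(hsimplex n ω).2] at h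
    exact h
  have hSM : ∀ n k, StronglyMeasurable[ℱ n] fun ω => p n ω k :=
    fun n k => (continuous_apply k).comp_stronglyMeasurable (hmart.stronglyAdapted n)
  have hASM : ∀ n k, AEStronglyMeasurable (fun ω => p n ω k) μ :=
    fun n k => ((hSM n k).mono (ℱ.le n)).aestronglyMeasurable
  have hint_of_bdd : ∀ {h : Ω → ℝ} {C : ℝ}, AEStronglyMeasurable h μ →
      (∀ ω, |h ω| ≤ C) → Integrable h μ := by
    intro h C hm hb
    exact (integrable_const C).mono' hm
      (Filter.Eventually.of_forall fun ω => by simpa [Real.norm_eq_abs] using hb ω)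
  have habs1 : ∀ n ω k, |p n ω k| ≤ 1 := fun n ω k =>
    abs_le.2 ⟨by linarith [(hb01 n ω k).1], (hb01 n ω k).2⟩
  have hintX : ∀ n k, Integrable (fun ω => p n ω k) μ := fun n k =>
    hint_of_bdd (hASM n k) (habs1 n · k)
  have hintXX : ∀ n n' k, Integrable (fun ω => p n ω k * p n' ω k) μ := by
    intro n n' k
    refine hint_of_bdd ((hASM n k).mul (hASM n' k)) (C := 1) fun ω => ?_
    rw [abs_mul]
    exact mul_le_one₀ (habs1 n ω k) (abs_nonneg _) (habs1 n' ω k)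
  -- componentwise martingale property
  have hcomp : ∀ i k, (fun ω => p i ω k) =ᵐ[μ] μ[fun ω => p (i+1) ω k | ℱ i] := by
    intro i k
    refine ae_eq_condExp_of_forall_setIntegral_eq (ℱ.le i) (hintX (i+1) k)
      (fun s _ _ => (hintX i k).integrableOn) (fun s hs _ => ?_)
      ((hSM i k).aestronglyMeasurable)
    have hset := hmart.setIntegral_eq (Nat.le_succ i) hs
    have h1 : ∀ j, ∫ ω in s, p j ω k ∂μ = (∫ ω in s, p j ω ∂μ) k := fun j =>
      (ContinuousLinearMap.proj (R := ℝ) (φ := fun _ : K => ℝ)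
        k).integral_comp_comm ((hmart.integrable j).integrableOn)
    rw [h1 i, h1 (i+1), hset]
  -- orthogonality of martingale increments
  have hortho : ∀ i k, ∫ ω, (p (i+1) ω k - p i ω k) ^ 2 ∂μ =
      (∫ ω, (p (i+1) ω k) ^ 2 ∂μ) - ∫ ω, (p i ω k) ^ 2 ∂μ := by
    intro i k
    have hcross : ∫ ω, p i ω k * p (i+1) ω k ∂μ = ∫ ω, p i ω k * p i ω k ∂μ := by
      have h1 : μ[fun ω => p i ω k * p (i+1) ω k | ℱ i] =ᵐ[μ]
          fun ω => p i ω k * (μ[fun ω' => p (i+1) ω' k | ℱ i]) ω :=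
        condExp_mul_of_stronglyMeasurable_left (hSM i k) (hintXX i (i+1) k) (hintX (i+1) k)
      have h2 : μ[fun ω => p i ω k * p (i+1) ω k | ℱ i] =ᵐ[μ]
          fun ω => p i ω k * p i ω k := by
        filter_upwards [h1, hcomp i k] with ω hω1 hω2
        rw [hω1, ← hω2]
      calc ∫ ω, p i ω k * p (i+1) ω k ∂μ
          = ∫ ω, (μ[fun ω' => p i ω' k * p (i+1) ω' k | ℱ i]) ω ∂μ :=
            (integral_condExp (ℱ.le i)).symm
        _ = ∫ ω, p i ω k * p i ω k ∂μ := integral_congr_ae h2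
    have e1 : (fun ω => (p (i+1) ω k - p i ω k) ^ 2) =
        fun ω => (p (i+1) ω k * p (i+1) ω k - 2 * (p i ω k * p (i+1) ω k))
          + p i ω k * p i ω k := by
      funext ω; ring
    have e2 : ∀ j, (fun ω => p j ω k * p j ω k) = fun ω => (p j ω k) ^ 2 := by
      intro j; funext ω; ring
    have hf1 : Integrable (fun ω => p (i+1) ω k * p (i+1) ω k
        - 2 * (p i ω k * p (i+1) ω k)) μ := by
      exact (hintXX (i+1) (i+1) k).sub ((hintXX i (i+1) k).const_mul 2)
    rw [e1, integral_add hf1 (hintXX i i k), integral_sub (hintXX (i+1) (i+1) k)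
      ((hintXX i (i+1) k).const_mul 2), integral_const_mul, hcross, e2 i, e2 (i+1)]
    ring
  -- integrability of increments and their squares
  have hintD2 : ∀ n k, Integrable (fun ω => (p (n+1) ω k - p n ω k) ^ 2) μ := by
    intro n k
    refine hint_of_bdd (C := 4) ?_ fun ω => ?_
    · have h1 : AEStronglyMeasurable
          (fun ω => (p (n+1) ω k - p n ω k) * (p (n+1) ω k - p n ω k)) μ := by
        exact ((hASM (n+1) k).sub (hASM n k)).mul ((hASM (n+1) k).sub (hASM n k))
      exact h1.congr (Filter.Eventually.of_forall fun ω => (sq _).symm)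
    · have h1 : |p (n+1) ω k - p n ω k| ≤ 2 :=
        abs_le.2 ⟨by linarith [(abs_le.1 (habs1 (n+1) ω k)).1,
            (abs_le.1 (habs1 n ω k)).2],
          by linarith [(abs_le.1 (habs1 (n+1) ω k)).2, (abs_le.1 (habs1 n ω k)).1]⟩
      calc |(p (n+1) ω k - p n ω k) ^ 2| = |p (n+1) ω k - p n ω k| ^ 2 := abs_pow _ _
        _ ≤ 2 ^ 2 := by nlinarith [abs_nonneg (p (n+1) ω k - p n ω k)]
        _ = 4 := by norm_num
  -- the ℓ¹ increment and its measurability / integrability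
  have hFSM : ∀ n, StronglyMeasurable[ℱ (n+1+1)]
      fun ω => ∑ k, |p (n+1+1) ω k - p (n+1) ω k| := by
    intro n
    refine Finset.stronglyMeasurable_fun_sum _ fun k _ => ?_
    have hd : StronglyMeasurable[ℱ (n+1+1)] fun ω => p (n+1+1) ω k - p (n+1) ω k :=
      (hSM (n+1+1) k).sub ((hSM (n+1) k).mono (ℱ.mono (Nat.le_succ _)))
    have : (fun ω => |p (n+1+1) ω k - p (n+1) ω k|) =
        fun ω => ‖p (n+1+1) ω k - p (n+1) ω k‖ := by
      funext ω; rw [Real.norm_eq_abs]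
    rw [this]
    exact hd.norm
  have hFbd : ∀ n ω, abs (∑ k, |p (n+1+1) ω k - p (n+1) ω k|) ≤ 2 := by
    intro n ω
    have h0 : (0:ℝ) ≤ ∑ k, |p (n+1+1) ω k - p (n+1) ω k| :=
      Finset.sum_nonneg fun k _ => abs_nonneg _
    have h2 : ∑ k, |p (n+1+1) ω k - p (n+1) ω k| ≤ 2 := by
      have : ∀ k ∈ Finset.univ, |p (n+1+1) ω k - p (n+1) ω k| ≤
          p (n+1+1) ω k + p (n+1) ω k := by
        intro k _
        exact abs_le.2 ⟨by linarith [(hb01 (n+1+1) ω k).1, (hb01 (n+1) ω k).1],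
          by linarith [(hb01 (n+1+1) ω k).1, (hb01 (n+1) ω k).1]⟩
      calc ∑ k, |p (n+1+1) ω k - p (n+1) ω k|
          ≤ ∑ k, (p (n+1+1) ω k + p (n+1) ω k) := Finset.sum_le_sum this
        _ = 2 := by
            rw [Finset.sum_add_distrib, (hsimplex (n+1+1) ω).2, (hsimplex (n+1) ω).2]
            norm_num
    exact abs_le.2 ⟨by linarith, h2⟩
  have hintF : ∀ n, Integrable (fun ω => ∑ k, |p (n+1+1) ω k - p (n+1) ω k|) μ :=
    fun n => hint_of_bdd ((hFSM n).mono (ℱ.le (n+1+1))).aestronglyMeasurable (hFbd n)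
  have hintF2 : ∀ n, Integrable (fun ω => (∑ k, |p (n+1+1) ω k - p (n+1) ω k|) ^ 2) μ := by
    intro n
    refine hint_of_bdd (C := 4) ?_ fun ω => ?_
    · have h1 : AEStronglyMeasurable (fun ω =>
          (∑ k, |p (n+1+1) ω k - p (n+1) ω k|) * ∑ k, |p (n+1+1) ω k - p (n+1) ω k|) μ := by
        exact ((hFSM n).mono (ℱ.le (n+1+1))).aestronglyMeasurable.mul
          ((hFSM n).mono (ℱ.le (n+1+1))).aestronglyMeasurable
      exact h1.congr (Filter.Eventually.of_forall fun ω => (sq _).symm)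
    · calc |(∑ k, |p (n+1+1) ω k - p (n+1) ω k|) ^ 2|
          = abs (∑ k, |p (n+1+1) ω k - p (n+1) ω k|) ^ 2 := abs_pow _ _
        _ ≤ 2 ^ 2 := by nlinarith [abs_nonneg (∑ k, |p (n+1+1) ω k - p (n+1) ω k|), hFbd n ω]
        _ = 4 := by norm_num
  -- second moments
  have hintsq : ∀ j k, Integrable (fun ω => (p j ω k) ^ 2) μ := fun j k =>
    (hintXX j j k).congr (Filter.Eventually.of_forall fun ω => (sq _).symm)
  set S : ℕ → ℝ := fun j => ∑ k, ∫ ω, (p j ω k) ^ 2 ∂μ with hSdef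
  have hS0 : ∀ j, 0 ≤ S j :=
    fun j => Finset.sum_nonneg fun k _ => integral_nonneg fun ω => sq_nonneg _
  have hS1 : ∀ j, S j ≤ 1 := by
    intro j
    have h1 : S j = ∫ ω, ∑ k, (p j ω k) ^ 2 ∂μ :=
      (integral_finset_sum _ fun k _ => hintsq j k).symm
    rw [h1]
    calc ∫ ω, ∑ k, (p j ω k) ^ 2 ∂μ ≤ ∫ _ω, (1:ℝ) ∂μ := by
          refine integral_mono (integrable_finset_sum _ fun k _ => hintsq j k)
            (integrable_const 1) fun ω => ?_
          have : ∀ k ∈ Finset.univ, (p j ω k) ^ 2 ≤ p j ω k := fun k _ => by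
            nlinarith [(hb01 j ω k).1, (hb01 j ω k).2]
          calc ∑ k, (p j ω k) ^ 2 ≤ ∑ k, p j ω k := Finset.sum_le_sum this
            _ = 1 := (hsimplex j ω).2
      _ = 1 := by simp
  -- key per-term bound
  have key : ∀ m : ℕ,
      (∫ ω, Set.indicator {ω' | ((m + 1 : ℕ) : ℕ∞) ≤ T ω'}
        (fun ω' => ∑ k, |p (m+2) ω' k - p (m+1) ω' k|) ω ∂μ) ≤
      c * (Fintype.card K : ℝ) * (S (m+2) - S (m+1)) := by
    intro m
    have hA : MeasurableSet {ω' | ((m+1 : ℕ) : ℕ∞) ≤ T ω'} := ℱ.le (m+1) _ (hT (m+1))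
    have hAm : MeasurableSet[ℱ (m+1)] {ω' | ((m+1 : ℕ) : ℕ∞) ≤ T ω'} := hT (m+1)
    calc ∫ ω, Set.indicator {ω' | ((m + 1 : ℕ) : ℕ∞) ≤ T ω'}
          (fun ω' => ∑ k, |p (m+2) ω' k - p (m+1) ω' k|) ω ∂μ
        = ∫ ω in {ω' | ((m+1 : ℕ) : ℕ∞) ≤ T ω'},
            (∑ k, |p (m+1+1) ω k - p (m+1) ω k|) ∂μ := integral_indicator hA
      _ = ∫ ω in {ω' | ((m+1 : ℕ) : ℕ∞) ≤ T ω'},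
            (μ[fun ω' => ∑ k, |p (m+1+1) ω' k - p (m+1) ω' k| | ℱ (m+1)]) ω ∂μ :=
          (setIntegral_condExp (ℱ.le (m+1)) (hintF m) hAm).symm
      _ = ∫ ω, Set.indicator {ω' | ((m+1 : ℕ) : ℕ∞) ≤ T ω'}
            (μ[fun ω' => ∑ k, |p (m+1+1) ω' k - p (m+1) ω' k| | ℱ (m+1)]) ω ∂μ :=
          (integral_indicator hA).symm
      _ ≤ ∫ ω, c * Set.indicator {ω' | ((m+1 : ℕ) : ℕ∞) ≤ T ω'}
            (μ[fun ω' => (∑ k, |p (m+1+1) ω' k - p (m+1) ω' k|) ^ 2 | ℱ (m+1)]) ω ∂μ := by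
          refine integral_mono_ae (integrable_condExp.indicator hA)
            ((integrable_condExp.indicator hA).const_mul c) ?_
          exact hstep (m+1) (Nat.le_add_left 1 m)
      _ = c * ∫ ω, Set.indicator {ω' | ((m+1 : ℕ) : ℕ∞) ≤ T ω'}
            (μ[fun ω' => (∑ k, |p (m+1+1) ω' k - p (m+1) ω' k|) ^ 2 | ℱ (m+1)]) ω ∂μ :=
          integral_const_mul c _
      _ = c * ∫ ω in {ω' | ((m+1 : ℕ) : ℕ∞) ≤ T ω'},
            (μ[fun ω' => (∑ k, |p (m+1+1) ω' k - p (m+1) ω' k|) ^ 2 | ℱ (m+1)]) ω ∂μ := by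
          rw [integral_indicator hA]
      _ = c * ∫ ω in {ω' | ((m+1 : ℕ) : ℕ∞) ≤ T ω'},
            (∑ k, |p (m+1+1) ω k - p (m+1) ω k|) ^ 2 ∂μ := by
          rw [setIntegral_condExp (ℱ.le (m+1)) (hintF2 m) hAm]
      _ ≤ c * ∫ ω, (∑ k, |p (m+1+1) ω k - p (m+1) ω k|) ^ 2 ∂μ := by
          refine mul_le_mul_of_nonneg_left (setIntegral_le_integral (hintF2 m) ?_) hc.le
          exact Filter.Eventually.of_forall fun ω => sq_nonneg _
      _ ≤ c * ∫ ω, (Fintype.card K : ℝ) *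
            ∑ k, (p (m+1+1) ω k - p (m+1) ω k) ^ 2 ∂μ := by
          refine mul_le_mul_of_nonneg_left (integral_mono (hintF2 m)
            ((integrable_finset_sum _ fun k _ => hintD2 (m+1) k).const_mul _)
            fun ω => ?_) hc.le
          have h := sq_sum_le_card_mul_sum_sq (s := Finset.univ)
            (f := fun k => |p (m+1+1) ω k - p (m+1) ω k|)
          simpa [sq_abs, Finset.card_univ] using h
      _ = c * ((Fintype.card K : ℝ) *
            ∑ k, ∫ ω, (p (m+1+1) ω k - p (m+1) ω k) ^ 2 ∂μ) := by
          rw [integral_const_mul, integral_finset_sum _ fun k _ => hintD2 (m+1) k]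
      _ = c * (Fintype.card K : ℝ) * (S (m+2) - S (m+1)) := by
          simp_rw [hortho (m+1)]
          rw [Finset.sum_sub_distrib]
          ring
  -- conclude by telescoping
  refine Real.tsum_le_of_sum_range_le (fun m => ?_) fun N => ?_
  · refine integral_nonneg fun ω => ?_
    exact Set.indicator_nonneg (fun ω' _ => Finset.sum_nonneg fun k _ => abs_nonneg _) ω
  · have htel : ∑ m ∈ Finset.range N,
        (c * (Fintype.card K : ℝ) * (S (m+2) - S (m+1))) =
        c * (Fintype.card K : ℝ) * (S (N+1) - S 1) := by
      rw [← Finset.mul_sum]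
      congr 1
      exact Finset.sum_range_sub (fun j => S (j+1)) N
    calc ∑ m ∈ Finset.range N, ∫ ω, Set.indicator {ω' | ((m + 1 : ℕ) : ℕ∞) ≤ T ω'}
          (fun ω' => ∑ k, |p (m+2) ω' k - p (m+1) ω' k|) ω ∂μ
        ≤ ∑ m ∈ Finset.range N, c * (Fintype.card K : ℝ) * (S (m+2) - S (m+1)) :=
          Finset.sum_le_sum fun m _ => key m
      _ = c * (Fintype.card K : ℝ) * (S (N+1) - S 1) := htel
      _ ≤ c * (Fintype.card K : ℝ) * 1 := by
          refine mul_le_mul_of_nonneg_left ?_ (by positivity)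
          linarith [hS0 1, hS1 (N+1)]
      _ = c * (Fintype.card K : ℝ) := mul_one _
end
end

section
/- Let (x,p,p') ∈ X₀ and x' := T(x,p,p') be the translation of x relative to p and p'. Then for every i ∈ I, the marginal of x' under p' equals the marginal of x under p: x̄'^{p'}(i) = x̄^p(i), where x̄'^{p'}(i) := ∑_k p'(k)·x'(i|k). -/
open Finset

noncomputable section
open Classical

/-- Membership in X₀. -/
def InX0 {K I : Type*} [Fintype K] (x : K → I → ℝ) (p p' : K → ℝ) : Prop :=
  (∀ (i : I) (k : K), 0 ≤ p' k + post p x i k - p k) ∧ ∀ k, 0 < p' k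

/-- The translation mapping T(x,p,p'). -/
def translAction {K I : Type*} [Fintype K] (x : K → I → ℝ) (p p' : K → ℝ) : K → I → ℝ :=
  fun k i =>
    if InX0 x p p' then bar p x i / p' k * (p' k + post p x i k - p k) else x k i

/-- the translation preserves the marginal: x̄'^{p'}(i) = x̄^p(i). -/
theorem translAction_marginal {K I : Type*} [Fintype K] [Fintype I] [Nonempty K] [Nonempty I]
    (x : K → I → ℝ) (hx : MixedAction x)
    (p p' : K → ℝ) (hp : pSimplex p) (hp' : pSimplex p')
    (hX0 : InX0 x p p') :
    ∀ i : I, (∑ k, p' k * translAction x p p' k i) = bar p x i := by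
  intro i
  have hpost : ∑ k, post p x i k = 1 := by
    by_cases h : bar p x i ≠ 0
    · have hpt : ∀ k : K, post p x i k = x k i * p k / bar p x i := fun k => if_pos h
      simp only [hpt]
      rw [← Finset.sum_div]
      have : ∑ k, x k i * p k = bar p x i := by
        unfold bar; exact Finset.sum_congr rfl fun k _ => mul_comm _ _
      rw [this, div_self h]
    · have hpt : ∀ k : K, post p x i k = p k := fun k => if_neg h
      simp only [hpt]; exact hp.2
  have hne : ∀ k : K, p' k ≠ 0 := fun k => ne_of_gt (hX0.2 k)
  calc ∑ k, p' k * translAction x p p' k i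
      = ∑ k, bar p x i * (p' k + post p x i k - p k) := by
        apply Finset.sum_congr rfl
        intro k _
        unfold translAction
        rw [if_pos hX0]
        field_simp [hne k]
    _ = bar p x i * ∑ k, (p' k + post p x i k - p k) := by
        rw [Finset.mul_sum]
    _ = bar p x i := by
        rw [Finset.sum_sub_distrib, Finset.sum_add_distrib, hp.2, hp'.2, hpost]
        ring
end
end

section
/- Let (x,p,p') ∈ X₀ and x' := T(x,p,p'). Then for every i ∈ I and k ∈ K, the posteriors satisfy p'^{x'}(k|i) − p^x(k|i) = p'(k) − p(k). -/
open Finset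

noncomputable section
open Classical

/-- the translation shifts posteriors by p' − p. -/
theorem translAction_posterior_shift {K I : Type*} [Fintype K] [Fintype I]
    [Nonempty K] [Nonempty I]
    (x : K → I → ℝ) (hx : MixedAction x)
    (p p' : K → ℝ) (hp : pSimplex p) (hp' : pSimplex p')
    (hX0 : InX0 x p p') :
    ∀ (i : I) (k : K),
      post p' (translAction x p p') i k - post p x i k = p' k - p k := by
  intro i k
  have hp'pos := hX0.2
  have hx' : ∀ k i, translAction x p p' k i
      = bar p x i / p' k * (p' k + post p x i k - p k) := by
    intro k i; simp [translAction, hX0]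
  have hsum : ∑ k, post p x i k = 1 := by
    by_cases h : bar p x i = 0
    · simp [post, h, hp.2]
    · simp only [post, h, ne_eq, not_false_iff, if_true]
      rw [← Finset.sum_div]
      rw [div_eq_one_iff_eq h]
      unfold bar
      exact Finset.sum_congr rfl fun k _ => mul_comm _ _
  have hbar : bar p' (translAction x p p') i = bar p x i := by
    have : ∀ k : K, p' k * translAction x p p' k i
        = bar p x i * (p' k + post p x i k - p k) := by
      intro k
      have hpk := (hp'pos k).ne'
      rw [hx']
      field_simp
    show ∑ k, p' k * translAction x p p' k i = bar p x i
    simp only [this, ← Finset.mul_sum]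
    rw [Finset.sum_sub_distrib, Finset.sum_add_distrib, hsum, hp.2, hp'.2]
    ring
  by_cases h : bar p x i = 0
  · simp [post, h, hbar]
  · have hpk := (hp'pos k).ne'
    have houter : post p' (translAction x p p') i k
        = translAction x p p' k i * p' k / bar p x i := by
      simp [post, hbar, h]
    have hinner : post p x i k = x k i * p k / bar p x i := by
      simp [post, h]
    rw [houter, hx', hinner]
    field_simp
    ring
end
end

section
/- Let x be a mixed action, p, p' ∈ Δ(K), x' := T(x,p,p'), q ∈ Δ(L), y : L → Δ(J), G ≥ 0, and g : K × L × I × J → ℝ with |g(k,ℓ,i,j)| ≤ G for all k,ℓ,i,j. Then |∑_{k,ℓ,i,j} p'(k)·q(ℓ)·x'(i|k)·y(j|ℓ)·g(k,ℓ,i,j) − ∑_{k,ℓ,i,j} p(k)·q(ℓ)·x(i|k)·y(j|ℓ)·g(k,ℓ,i,j)| ≤ G·‖p' − p‖₁. -/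
open Finset

noncomputable section
open Classical

/-- payoff closeness under the translation mapping. -/
theorem translAction_payoff_close {K L I J : Type*}
    [Fintype K] [Fintype L] [Fintype I] [Fintype J]
    [Nonempty K] [Nonempty L] [Nonempty I] [Nonempty J]
    (x : K → I → ℝ) (hx : MixedAction x)
    (p p' : K → ℝ) (hp : pSimplex p) (hp' : pSimplex p')
    (q : L → ℝ) (hq : pSimplex q)
    (y : L → J → ℝ) (hy : MixedAction y)
    (G : ℝ) (hG : 0 ≤ G)
    (g : K → L → I → J → ℝ) (hg : ∀ k l i j, |g k l i j| ≤ G) :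
    |(∑ k, ∑ l, ∑ i, ∑ j, p' k * q l * translAction x p p' k i * y l j * g k l i j) -
        ∑ k, ∑ l, ∑ i, ∑ j, p k * q l * x k i * y l j * g k l i j| ≤
      G * ∑ k, |p' k - p k| := by
  -- key bounding lemma
  have hkey : ∀ (w : K → I → ℝ), (∀ k i, 0 ≤ w k i) → (∀ k, ∑ i, w k i = 1) →
      ∀ d : K → ℝ,
      |∑ k, ∑ l, ∑ i, ∑ j, d k * q l * w k i * y l j * g k l i j| ≤ G * ∑ k, |d k| := by
    intro w hw hw1 d
    calc |∑ k, ∑ l, ∑ i, ∑ j, d k * q l * w k i * y l j * g k l i j|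
        ≤ ∑ k, |∑ l, ∑ i, ∑ j, d k * q l * w k i * y l j * g k l i j| :=
          Finset.abs_sum_le_sum_abs _ _
      _ ≤ ∑ k, |d k| * G := by
          refine Finset.sum_le_sum fun k _ => ?_
          have hA : ∑ l, ∑ i, ∑ j, d k * q l * w k i * y l j * g k l i j
              = d k * ∑ l, ∑ i, ∑ j, q l * w k i * y l j * g k l i j := by
            rw [Finset.mul_sum]
            refine Finset.sum_congr rfl fun l _ => ?_
            rw [Finset.mul_sum]
            refine Finset.sum_congr rfl fun i _ => ?_
            rw [Finset.mul_sum]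
            exact Finset.sum_congr rfl fun j _ => by ring
          rw [hA, abs_mul]
          refine mul_le_mul_of_nonneg_left ?_ (abs_nonneg _)
          have hB : |∑ l, ∑ i, ∑ j, q l * w k i * y l j * g k l i j|
              ≤ ∑ l, ∑ i, ∑ j, q l * w k i * y l j * G := by
            calc |∑ l, ∑ i, ∑ j, q l * w k i * y l j * g k l i j|
                ≤ ∑ l, |∑ i, ∑ j, q l * w k i * y l j * g k l i j| :=
                  Finset.abs_sum_le_sum_abs _ _
              _ ≤ ∑ l, ∑ i, ∑ j, q l * w k i * y l j * G := by
                  refine Finset.sum_le_sum fun l _ => ?_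
                  calc |∑ i, ∑ j, q l * w k i * y l j * g k l i j|
                      ≤ ∑ i, |∑ j, q l * w k i * y l j * g k l i j| :=
                        Finset.abs_sum_le_sum_abs _ _
                    _ ≤ ∑ i, ∑ j, q l * w k i * y l j * G := by
                        refine Finset.sum_le_sum fun i _ => ?_
                        calc |∑ j, q l * w k i * y l j * g k l i j|
                            ≤ ∑ j, |q l * w k i * y l j * g k l i j| :=
                              Finset.abs_sum_le_sum_abs _ _
                          _ ≤ ∑ j, q l * w k i * y l j * G := by
                              refine Finset.sum_le_sum fun j _ => ?_
                              have h1 : |q l * w k i * y l j * g k l i j|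
                                  = q l * w k i * y l j * |g k l i j| := by
                                rw [abs_mul]
                                congr 1
                                exact abs_of_nonneg
                                  (mul_nonneg (mul_nonneg (hq.1 l) (hw k i)) (hy.1 l j))
                              rw [h1]
                              exact mul_le_mul_of_nonneg_left (hg k l i j)
                                (mul_nonneg (mul_nonneg (hq.1 l) (hw k i)) (hy.1 l j))
          refine hB.trans ?_
          have hsum : ∑ l, ∑ i, ∑ j, q l * w k i * y l j * G = G := by
            have h3 : ∀ l i, ∑ j, q l * w k i * y l j * G = q l * w k i * G := by
              intro l i
              calc ∑ j, q l * w k i * y l j * G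
                  = (∑ j, y l j) * (q l * w k i * G) := by
                    rw [Finset.sum_mul]
                    exact Finset.sum_congr rfl fun j _ => by ring
                _ = q l * w k i * G := by rw [hy.2]; ring
            have h2 : ∀ l, ∑ i, ∑ j, q l * w k i * y l j * G = q l * G := by
              intro l
              calc ∑ i, ∑ j, q l * w k i * y l j * G = ∑ i, q l * w k i * G :=
                    Finset.sum_congr rfl fun i _ => h3 l i
                _ = (∑ i, w k i) * (q l * G) := by
                    rw [Finset.sum_mul]
                    exact Finset.sum_congr rfl fun i _ => by ring
                _ = q l * G := by rw [hw1]; ring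
            calc ∑ l, ∑ i, ∑ j, q l * w k i * y l j * G = ∑ l, q l * G :=
                  Finset.sum_congr rfl fun l _ => h2 l
              _ = (∑ l, q l) * G := (Finset.sum_mul _ _ _).symm
              _ = G := by rw [hq.2]; ring
          rw [hsum]
      _ = G * ∑ k, |d k| := by
          rw [Finset.mul_sum]
          exact Finset.sum_congr rfl fun k _ => by ring
  have hbp : ∀ i k, bar p x i * post p x i k = p k * x k i := by
    intro i k
    unfold post
    split_ifs with hb
    · field_simp
    · push_neg at hb
      have h0 : p k * x k i = 0 :=
        (Finset.sum_eq_zero_iff_of_nonneg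
          (fun k' _ => mul_nonneg (hp.1 k') (hx.1 k' i))).mp hb k (Finset.mem_univ k)
      rw [hb, zero_mul, h0]
  by_cases h : InX0 x p p'
  · have hx' : ∀ k i, p' k * translAction x p p' k i - p k * x k i
        = (p' k - p k) * bar p x i := by
      intro k i
      unfold translAction
      rw [if_pos h]
      have hpk : p' k ≠ 0 := (h.2 k).ne'
      have hb := hbp i k
      field_simp
      linear_combination hb
    have heq : (∑ k, ∑ l, ∑ i, ∑ j, p' k * q l * translAction x p p' k i * y l j * g k l i j) -
        ∑ k, ∑ l, ∑ i, ∑ j, p k * q l * x k i * y l j * g k l i j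
        = ∑ k, ∑ l, ∑ i, ∑ j, (p' k - p k) * q l * bar p x i * y l j * g k l i j := by
      rw [← Finset.sum_sub_distrib]
      refine Finset.sum_congr rfl fun k _ => ?_
      rw [← Finset.sum_sub_distrib]
      refine Finset.sum_congr rfl fun l _ => ?_
      rw [← Finset.sum_sub_distrib]
      refine Finset.sum_congr rfl fun i _ => ?_
      rw [← Finset.sum_sub_distrib]
      refine Finset.sum_congr rfl fun j _ => ?_
      have hd := hx' k i
      linear_combination (q l * y l j * g k l i j) * hd
    rw [heq]
    have hbar1 : ∑ i, bar p x i = 1 := by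
      unfold bar
      rw [Finset.sum_comm]
      calc ∑ k, ∑ i, p k * x k i = ∑ k, p k := by
            refine Finset.sum_congr rfl fun k _ => ?_
            rw [← Finset.mul_sum, hx.2, mul_one]
        _ = 1 := hp.2
    exact hkey (fun _ i => bar p x i)
      (fun k i => Finset.sum_nonneg fun k' _ => mul_nonneg (hp.1 k') (hx.1 k' i))
      (fun k => hbar1) (fun k => p' k - p k)
  · have hx' : ∀ k i, translAction x p p' k i = x k i := by
      intro k i; unfold translAction; rw [if_neg h]
    have heq : (∑ k, ∑ l, ∑ i, ∑ j, p' k * q l * translAction x p p' k i * y l j * g k l i j) -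
        ∑ k, ∑ l, ∑ i, ∑ j, p k * q l * x k i * y l j * g k l i j
        = ∑ k, ∑ l, ∑ i, ∑ j, (p' k - p k) * q l * x k i * y l j * g k l i j := by
      rw [← Finset.sum_sub_distrib]
      refine Finset.sum_congr rfl fun k _ => ?_
      rw [← Finset.sum_sub_distrib]
      refine Finset.sum_congr rfl fun l _ => ?_
      rw [← Finset.sum_sub_distrib]
      refine Finset.sum_congr rfl fun i _ => ?_
      rw [← Finset.sum_sub_distrib]
      refine Finset.sum_congr rfl fun j _ => ?_
      rw [hx']
      ring
    rw [heq]
    exact hkey x hx.1 hx.2 (fun k => p' k - p k)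
end
end
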